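/- Square root regret of the online tolling algorithm (Theorem 2, regret part, pathwise form): Fix T ≥ 1 and run the toll update dynamics with step size γ = 1/√T. Suppose that for each period t = 1,...,T there is a routing instance on the fixed edge set E, capacities c (c_e ≥ 0) and latencies l (l_e ≥ 0), with a finite user set U (n := |U|), period-t values of time v^t_u ≥ 0, period-t nonempty finite path sets 𝒫^t_u, and outside-option costs λ_u ≥ 0; that a^t is an equilibrium assignment under the toll τ^t for the period-t instance; and that x^t is the edge flow of a^t. Let U_t denote the total system cost of a^t and let U_t* denote the minimum total system cost over all capacity-feasible assignments for the period-t instance. Then Σ_{t=1}^T (U_t − U_t*) ≤ (|E| (n + max_{e∈E} c_e)² / 2) · √T. -/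

import Mathlib

open Finset

/-- System (untolled) cost incurred by a single user with value of time `vu` and
outside-option cost `lamu`, given their chosen option (a path or the outside option). -/
noncomputable def sysCost {E : Type*} (l : E → ℝ) (vu lamu : ℝ) : Option (Finset E) → ℝ
  | some P => vu * ∑ e ∈ P, l e
  | none   => lamu

/-- Travel cost (including tolls) incurred by a single user, given their chosen option. -/
noncomputable def userCost {E : Type*} (l τ : E → ℝ) (vu lamu : ℝ) : Option (Finset E) → ℝ
  | some P => vu * ∑ e ∈ P, l e + ∑ e ∈ P, τ e
  | none   => lamu

/-- Total system cost of an assignment. -/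
noncomputable def totalCost {E U : Type*} [Fintype U] (l : E → ℝ) (v lam : U → ℝ)
    (a : U → Option (Finset E)) : ℝ :=
  ∑ u, sysCost l (v u) (lam u) (a u)

/-- Edge flow of an assignment: the number of users whose chosen path contains `e`. -/
noncomputable def edgeFlow {E U : Type*} [Fintype U] [DecidableEq E]
    (a : U → Option (Finset E)) (e : E) : ℝ :=
  ∑ u, (match a u with
    | some P => if e ∈ P then (1 : ℝ) else 0
    | none => 0)

/-- Toll paid by a single user, given their chosen option. -/
noncomputable def tollOf {E : Type*} (τ : E → ℝ) : Option (Finset E) → ℝ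
  | some P => ∑ e ∈ P, τ e
  | none => 0

lemma userCost_eq_sys_add_toll {E : Type*} (l τ : E → ℝ) (vu lamu : ℝ)
    (o : Option (Finset E)) :
    userCost l τ vu lamu o = sysCost l vu lamu o + tollOf τ o := by
  cases o <;> simp [userCost, sysCost, tollOf]

lemma toll_sum {E U : Type*} [Fintype E] [Fintype U] [DecidableEq E]
    (τ : E → ℝ) (b : U → Option (Finset E)) :
    ∑ u, tollOf τ (b u) = ∑ e, τ e * edgeFlow b e := by
  unfold edgeFlow
  simp_rw [Finset.mul_sum]
  rw [Finset.sum_comm]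
  refine Finset.sum_congr rfl fun u _ => ?_
  cases h : b u with
  | none => simp [tollOf]
  | some P => simp [tollOf, mul_ite, Finset.sum_ite_mem]

lemma edgeFlow_nonneg {E U : Type*} [Fintype U] [DecidableEq E]
    (b : U → Option (Finset E)) (e : E) : 0 ≤ edgeFlow b e := by
  refine Finset.sum_nonneg fun u _ => ?_
  cases b u with
  | none => simp
  | some P => dsimp only; split <;> norm_num

lemma edgeFlow_le_card {E U : Type*} [Fintype U] [DecidableEq E]
    (b : U → Option (Finset E)) (e : E) : edgeFlow b e ≤ Fintype.card U := by
  unfold edgeFlow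
  calc (∑ u : U, (match b u with
        | some P => if e ∈ P then (1 : ℝ) else 0
        | none => 0))
      ≤ ∑ _u : U, (1 : ℝ) := by
        refine Finset.sum_le_sum fun u _ => ?_
        cases b u with
        | none => simp
        | some P => dsimp only; split <;> norm_num
    _ = Fintype.card U := by simp

lemma telescope_Icc (f : ℕ → ℝ) (T : ℕ) :
    ∑ t ∈ Finset.Icc 1 T, (f t - f (t + 1)) = f 1 - f (T + 1) := by
  induction T with
  | zero => simp
  | succ n ih =>
      rw [Finset.sum_Icc_succ_top (by omega : 1 ≤ n + 1), ih]
      ring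

/-- **Square root regret of the online tolling algorithm** (Theorem 2, regret part,
pathwise form): running the toll update dynamics with step size `γ = 1/√T`, where at each
period `t = 1,…,T` the assignment `a^t` is an equilibrium for the period-`t` instance under
the toll `τ^t`, the cumulative regret relative to the per-period optimal capacity-feasible
costs `U_t*` satisfies `Σ_{t=1}^T (U_t − U_t*) ≤ (|E| (n + max_e c_e)²/2) √T`. -/
theorem online_tolling_sqrt_regret
    {E U : Type*} [Fintype E] [Nonempty E] [DecidableEq E] [Fintype U]
    (T : ℕ) (hT : 1 ≤ T)
    (l c : E → ℝ) (hl : ∀ e, 0 ≤ l e) (hc : ∀ e, 0 ≤ c e)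
    (v : ℕ → U → ℝ) (hv : ∀ t u, 0 ≤ v t u)
    (lam : U → ℝ) (hlam : ∀ u, 0 ≤ lam u)
    (paths : ℕ → U → Finset (Finset E)) (hpaths : ∀ t u, (paths t u).Nonempty)
    (a : ℕ → U → Option (Finset E))
    (ha : ∀ t, 1 ≤ t → ∀ u P, a t u = some P → P ∈ paths t u)
    (τ : ℕ → E → ℝ)
    (hτ1 : ∀ e, τ 1 e = 0)
    (hrec : ∀ t, 1 ≤ t → ∀ e,
      τ (t + 1) e = max (τ t e - (1 / Real.sqrt T) * (c e - edgeFlow (a t) e)) 0)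
    (heq : ∀ t, 1 ≤ t → ∀ u, userCost l (τ t) (v t u) (lam u) (a t u) =
      min (lam u)
        ((paths t u).inf' (hpaths t u) fun P => v t u * ∑ e ∈ P, l e + ∑ e ∈ P, τ t e))
    (Ustar : ℕ → ℝ)
    (hUstar : ∀ t ∈ Finset.Icc 1 T,
      (∃ b : U → Option (Finset E), (∀ u P, b u = some P → P ∈ paths t u) ∧
          (∀ e, edgeFlow b e ≤ c e) ∧ totalCost l (v t) lam b = Ustar t) ∧
        ∀ b : U → Option (Finset E), (∀ u P, b u = some P → P ∈ paths t u) →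
          (∀ e, edgeFlow b e ≤ c e) → Ustar t ≤ totalCost l (v t) lam b) :
    ∑ t ∈ Finset.Icc 1 T, (totalCost l (v t) lam (a t) - Ustar t) ≤
      (Fintype.card E) *
          ((Fintype.card U) + Finset.univ.sup' Finset.univ_nonempty c) ^ 2 / 2 *
        Real.sqrt T := by
  classical
  set γ : ℝ := 1 / Real.sqrt T with hγdef
  have hTpos : (0:ℝ) < T := by exact_mod_cast hT
  have hsqpos : 0 < Real.sqrt T := Real.sqrt_pos.mpr hTpos
  have hγpos : 0 < γ := by positivity
  set M : ℝ := Finset.univ.sup' Finset.univ_nonempty c with hM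
  set B : ℝ := (Fintype.card U : ℝ) + M with hB
  have hMle : ∀ e, c e ≤ M := fun e => Finset.le_sup' c (Finset.mem_univ e)
  have hM0 : 0 ≤ M := le_trans (hc (Classical.arbitrary E)) (hMle _)
  have hn0 : (0:ℝ) ≤ (Fintype.card U : ℝ) := Nat.cast_nonneg _
  have hB0 : 0 ≤ B := by rw [hB]; positivity
  have hτnn : ∀ t, 1 ≤ t → ∀ e, 0 ≤ τ t e := by
    intro t ht
    induction t, ht using Nat.le_induction with
    | base => intro e; rw [hτ1]
    | succ t ht ih => intro e; rw [hrec t ht]; exact le_max_right _ _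
  have hD : ∀ t ∈ Finset.Icc 1 T,
      totalCost l (v t) lam (a t) - Ustar t
        ≤ ∑ e, τ t e * (c e - edgeFlow (a t) e) := by
    intro t ht
    have ht1 : 1 ≤ t := (Finset.mem_Icc.mp ht).1
    obtain ⟨⟨b, hbp, hbcap, hbcost⟩, -⟩ := hUstar t ht
    have huser : ∀ u, userCost l (τ t) (v t u) (lam u) (a t u)
        ≤ userCost l (τ t) (v t u) (lam u) (b u) := by
      intro u
      rw [heq t ht1 u]
      cases hbu : b u with
      | none => exact min_le_left _ _
      | some P =>
          exact le_trans (min_le_right _ _) (Finset.inf'_le _ (hbp u P hbu))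
    have expand : ∀ b' : U → Option (Finset E),
        ∑ u, userCost l (τ t) (v t u) (lam u) (b' u)
          = totalCost l (v t) lam b' + ∑ e, τ t e * edgeFlow b' e := by
      intro b'
      simp_rw [userCost_eq_sys_add_toll]
      rw [Finset.sum_add_distrib, toll_sum]
      rfl
    have h1 : totalCost l (v t) lam (a t) + ∑ e, τ t e * edgeFlow (a t) e
        ≤ totalCost l (v t) lam b + ∑ e, τ t e * edgeFlow b e := by
      rw [← expand (a t), ← expand b]
      exact Finset.sum_le_sum fun u _ => huser u
    have h2 : ∑ e, τ t e * edgeFlow b e ≤ ∑ e, τ t e * c e :=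
      Finset.sum_le_sum fun e _ => mul_le_mul_of_nonneg_left (hbcap e) (hτnn t ht1 e)
    have h3 : ∑ e, τ t e * (c e - edgeFlow (a t) e)
        = ∑ e, τ t e * c e - ∑ e, τ t e * edgeFlow (a t) e := by
      rw [← Finset.sum_sub_distrib]
      exact Finset.sum_congr rfl fun e _ => by ring
    rw [h3]
    linarith [h1, h2, hbcost]
  have hkey : ∀ t ∈ Finset.Icc 1 T,
      2 * γ * (totalCost l (v t) lam (a t) - Ustar t)
        ≤ (∑ e, ((τ t e) ^ 2 - (τ (t + 1) e) ^ 2))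
          + (Fintype.card E : ℝ) * (γ ^ 2 * B ^ 2) := by
    intro t ht
    have ht1 : 1 ≤ t := (Finset.mem_Icc.mp ht).1
    have hdesc : ∀ e : E, 2 * γ * (τ t e * (c e - edgeFlow (a t) e))
        ≤ ((τ t e) ^ 2 - (τ (t + 1) e) ^ 2) + γ ^ 2 * B ^ 2 := by
      intro e
      have hx0 := edgeFlow_nonneg (a t) e
      have hxn := edgeFlow_le_card (a t) e
      have hgB : (c e - edgeFlow (a t) e) ^ 2 ≤ B ^ 2 := by
        apply sq_le_sq'
        · rw [hB]; linarith [hMle e, hc e]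
        · rw [hB]; linarith [hMle e, hc e]
      have hstep : (τ (t + 1) e) ^ 2 ≤ (τ t e - γ * (c e - edgeFlow (a t) e)) ^ 2 := by
        rw [hrec t ht1 e]
        have h1 : max (τ t e - γ * (c e - edgeFlow (a t) e)) 0
            ≤ |τ t e - γ * (c e - edgeFlow (a t) e)| :=
          max_le (le_abs_self _) (abs_nonneg _)
        have h2 : -|τ t e - γ * (c e - edgeFlow (a t) e)|
            ≤ max (τ t e - γ * (c e - edgeFlow (a t) e)) 0 :=
          le_trans (neg_nonpos.mpr (abs_nonneg _)) (le_max_right _ _)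
        have h3 := sq_le_sq' h2 h1
        rwa [sq_abs] at h3
      nlinarith [hstep, hgB, sq_nonneg γ]
    calc 2 * γ * (totalCost l (v t) lam (a t) - Ustar t)
        ≤ 2 * γ * ∑ e, τ t e * (c e - edgeFlow (a t) e) :=
          mul_le_mul_of_nonneg_left (hD t ht) (by positivity)
      _ = ∑ e, 2 * γ * (τ t e * (c e - edgeFlow (a t) e)) := by rw [Finset.mul_sum]
      _ ≤ ∑ e, (((τ t e) ^ 2 - (τ (t + 1) e) ^ 2) + γ ^ 2 * B ^ 2) :=
          Finset.sum_le_sum fun e _ => hdesc e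
      _ = (∑ e, ((τ t e) ^ 2 - (τ (t + 1) e) ^ 2))
            + (Fintype.card E : ℝ) * (γ ^ 2 * B ^ 2) := by
          rw [Finset.sum_add_distrib, Finset.sum_const, Finset.card_univ, nsmul_eq_mul]
  set S : ℝ := ∑ t ∈ Finset.Icc 1 T, (totalCost l (v t) lam (a t) - Ustar t) with hS
  have htel : (∑ t ∈ Finset.Icc 1 T, ∑ e, ((τ t e) ^ 2 - (τ (t + 1) e) ^ 2)) ≤ 0 := by
    rw [Finset.sum_comm]
    refine Finset.sum_nonpos fun e _ => ?_
    calc (∑ t ∈ Finset.Icc 1 T, ((τ t e) ^ 2 - (τ (t + 1) e) ^ 2))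
        = (τ 1 e) ^ 2 - (τ (T + 1) e) ^ 2 := telescope_Icc (fun s => (τ s e) ^ 2) T
      _ ≤ 0 := by rw [hτ1 e]; nlinarith [sq_nonneg (τ (T + 1) e)]
  have hsum : 2 * γ * S ≤ (T : ℝ) * ((Fintype.card E : ℝ) * (γ ^ 2 * B ^ 2)) := by
    rw [hS, Finset.mul_sum]
    calc ∑ t ∈ Finset.Icc 1 T, 2 * γ * (totalCost l (v t) lam (a t) - Ustar t)
        ≤ ∑ t ∈ Finset.Icc 1 T,
            ((∑ e, ((τ t e) ^ 2 - (τ (t + 1) e) ^ 2))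
              + (Fintype.card E : ℝ) * (γ ^ 2 * B ^ 2)) :=
          Finset.sum_le_sum hkey
      _ = (∑ t ∈ Finset.Icc 1 T, ∑ e, ((τ t e) ^ 2 - (τ (t + 1) e) ^ 2))
            + (T : ℝ) * ((Fintype.card E : ℝ) * (γ ^ 2 * B ^ 2)) := by
          rw [Finset.sum_add_distrib, Finset.sum_const, Nat.card_Icc, nsmul_eq_mul]
          norm_num
      _ ≤ 0 + (T : ℝ) * ((Fintype.card E : ℝ) * (γ ^ 2 * B ^ 2)) :=
          add_le_add htel le_rfl
      _ = (T : ℝ) * ((Fintype.card E : ℝ) * (γ ^ 2 * B ^ 2)) := by ring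
  have hss : Real.sqrt T * Real.sqrt T = (T : ℝ) := Real.mul_self_sqrt (le_of_lt hTpos)
  have hTγ : (T : ℝ) * γ = Real.sqrt T := by
    rw [hγdef, mul_one_div, div_eq_iff (ne_of_gt hsqpos)]
    exact hss.symm
  have h5 : γ * (2 * S) ≤ γ * (Real.sqrt T * ((Fintype.card E : ℝ) * B ^ 2)) := by
    calc γ * (2 * S) = 2 * γ * S := by ring
      _ ≤ (T : ℝ) * ((Fintype.card E : ℝ) * (γ ^ 2 * B ^ 2)) := hsum
      _ = ((T : ℝ) * γ) * (γ * ((Fintype.card E : ℝ) * B ^ 2)) := by ring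
      _ = γ * (Real.sqrt T * ((Fintype.card E : ℝ) * B ^ 2)) := by rw [hTγ]; ring
  have h6 : 2 * S ≤ Real.sqrt T * ((Fintype.card E : ℝ) * B ^ 2) :=
    (mul_le_mul_iff_right₀ hγpos).mp h5
  have h7 : Real.sqrt T * ((Fintype.card E : ℝ) * B ^ 2) / 2
      = (Fintype.card E : ℝ) * B ^ 2 / 2 * Real.sqrt T := by ring
  rw [← h7]
  clear_value S B M γ
  linarith [h6]
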